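/- Let f be a real analytic function on an open connected set U ⊆ ℝ^d that is not identically zero. Then the zero set {x ∈ U : f(x) = 0} has Lebesgue measure zero. -/

import Mathlib

open MeasureTheory Metric Filter Set
open scoped Topology ENNReal NNReal Pointwise

lemma cone_lemma {E : Type*} [NormedAddCommGroup E] [NormedSpace ℝ E]
    {f : E → ℝ} {p : FormalMultilinearSeries ℝ E ℝ}
    {x₀ : E} {R : ℝ≥0∞}
    (hp : HasFPowerSeriesOnBall f p x₀ R)
    (hne : ∃ n y, p n (fun _ => y) ≠ 0) (hfx₀ : f x₀ = 0) :
    ∃ W : Set E, IsOpen W ∧ W.Nonempty ∧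
      (∀ s : ℝ, 0 < s → ∀ y ∈ W, s • y ∈ W) ∧
      ∃ t₀ > (0:ℝ), ∀ y ∈ W, ‖y‖ < t₀ → f (x₀ + y) ≠ 0 := by
  obtain ⟨ρ, hρ0, hρR⟩ := ENNReal.lt_iff_exists_nnreal_btwn.mp hp.r_pos
  have hρrad : (ρ : ℝ≥0∞) < p.radius := lt_of_lt_of_le hρR hp.r_le
  have hρpos : (0:ℝ) < ρ := by exact_mod_cast hρ0
  obtain ⟨C, hC0, hC⟩ := p.norm_mul_pow_le_of_lt_radius hρrad
  have hP : ∃ n, ∃ y, p n (fun _ => y) ≠ 0 := hne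
  classical
  set k := Nat.find hP with hk
  obtain ⟨v', hv'⟩ : ∃ y, p k (fun _ => y) ≠ 0 := Nat.find_spec hP
  have hmin : ∀ m < k, ∀ y, p m (fun _ => y) = 0 := by
    intro m hm y
    have := Nat.find_min hP hm
    push_neg at this
    exact this y
  have hkpos : 0 < k := by
    rcases Nat.eq_zero_or_pos k with h | h
    swap
    · exact h
    · exfalso
      apply hv'
      rw [h] at hv' ⊢
      have h0 : p 0 (fun _ => v') = f x₀ := hp.coeff_zero _
      rw [h0, hfx₀]
  have hv'0 : v' ≠ 0 := by
    intro h
    apply hv'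
    rw [h]
    exact (p k).map_coord_zero ⟨0, hkpos⟩ rfl
  set v : E := ‖v'‖⁻¹ • v' with hvdef
  have hnv' : (0:ℝ) < ‖v'‖ := norm_pos_iff.mpr hv'0
  have hvnorm : ‖v‖ = 1 := by
    rw [hvdef, norm_smul, norm_inv, norm_norm, inv_mul_cancel₀ (ne_of_gt hnv')]
  have hqv : p k (fun _ => v) ≠ 0 := by
    have h1 : p k (fun _ => v) = (‖v'‖⁻¹) ^ k • p k (fun _ => v') := by
      have := (p k).map_smul_univ (fun _ : Fin k => ‖v'‖⁻¹) (fun _ : Fin k => v')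
      simpa using this
    rw [h1]
    simp only [smul_eq_mul, ne_eq, mul_eq_zero, not_or]
    exact ⟨pow_ne_zero _ (inv_ne_zero (ne_of_gt hnv')), hv'⟩
  set c : ℝ := |p k (fun _ => v)| with hcdef
  have hc0 : 0 < c := abs_pos.mpr hqv
  have hcont : Continuous fun y : E => p k (fun _ => y) :=
    (p k).cont.comp (continuous_pi fun _ => continuous_id)
  have hVopen : IsOpen {u : E | c / 2 < |p k (fun _ => u)|} :=
    isOpen_lt continuous_const (continuous_abs.comp hcont)
  have hvV : v ∈ {u : E | c / 2 < |p k (fun _ => u)|} := by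
    simp only [mem_setOf_eq, ← hcdef]
    linarith
  obtain ⟨δ, hδ0, hδ⟩ := Metric.isOpen_iff.mp hVopen v hvV
  refine ⟨{y : E | ‖y - ‖y‖ • v‖ < δ * ‖y‖}, ?_, ⟨v, ?_⟩, ?_, ?_⟩
  · exact isOpen_lt ((continuous_id.sub (continuous_norm.smul continuous_const)).norm)
      (continuous_const.mul continuous_norm)
  · simp [hvnorm, hδ0]
  · intro s hs y hy
    simp only [mem_setOf_eq] at hy
    show ‖s • y - ‖s • y‖ • v‖ < δ * ‖s • y‖
    have h1 : ‖s • y‖ = s * ‖y‖ := by rw [norm_smul, Real.norm_of_nonneg hs.le]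
    rw [h1, mul_smul, ← smul_sub, norm_smul, Real.norm_of_nonneg hs.le, mul_left_comm]
    exact mul_lt_mul_of_pos_left hy hs
  · refine ⟨min (ρ / 2) (c * ρ ^ (k + 1) / (4 * C)), ?_, ?_⟩
    · exact lt_min (by linarith)
        (div_pos (mul_pos hc0 (pow_pos hρpos _)) (by linarith))
    · intro y hy hyn
      set t : ℝ := ‖y‖ with htdef
      have ht0 : 0 < t := by
        rcases eq_or_ne y 0 with h | h
        · exfalso; simp [h] at hy
        · exact norm_pos_iff.mpr h
      have htρ : t < ρ / 2 := lt_of_lt_of_le hyn (min_le_left _ _)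
      have htc : t < c * ρ ^ (k + 1) / (4 * C) := lt_of_lt_of_le hyn (min_le_right _ _)
      set u : E := t⁻¹ • y with hudef
      have hyu : y = t • u := by
        rw [hudef, smul_smul, mul_inv_cancel₀ (ne_of_gt ht0), one_smul]
      have huv : ‖u - v‖ < δ := by
        have h1 : u - v = t⁻¹ • (y - t • v) := by
          rw [smul_sub, hudef, smul_smul, inv_mul_cancel₀ (ne_of_gt ht0), one_smul]
        rw [h1, norm_smul, norm_inv, Real.norm_of_nonneg ht0.le]
        calc t⁻¹ * ‖y - t • v‖ < t⁻¹ * (δ * t) := by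
              apply mul_lt_mul_of_pos_left _ (inv_pos.mpr ht0)
              simpa [htdef] using hy
          _ = δ := by field_simp
      have hqu : c / 2 < |p k (fun _ => u)| := hδ (by simpa [dist_eq_norm] using huv)
      have hyball : y ∈ Metric.eball (0 : E) R := by
        rw [Metric.mem_eball, edist_zero_right]
        calc (‖y‖₊ : ℝ≥0∞) < (ρ : ℝ≥0∞) := by
              rw [ENNReal.coe_lt_coe, ← NNReal.coe_lt_coe]
              simp only [coe_nnnorm]
              linarith
          _ < R := hρR
      have hS : HasSum (fun n => p n fun _ => y) (f (x₀ + y)) := hp.hasSum hyball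
      set g : ℕ → ℝ := fun n => p n fun _ => y with hgdef
      set S : ℝ := f (x₀ + y) with hSdef
      have h1 : HasSum (fun n => g (n + k)) S := by
        have h := (hasSum_nat_add_iff' (f := g) k).mpr hS
        have hz : ∑ i ∈ Finset.range k, g i = 0 :=
          Finset.sum_eq_zero fun i hi => hmin i (Finset.mem_range.mp hi) y
        rwa [hz, sub_zero] at h
      have h2 : HasSum (fun n => g (n + 1 + k)) (S - g k) := by
        have h := (hasSum_nat_add_iff' (f := fun n => g (n + k)) 1).mpr h1
        simpa using h
      have hgb : ∀ n, ‖g n‖ ≤ C * (t / ρ) ^ n := by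
        intro n
        have h1' : ‖g n‖ ≤ ‖p n‖ * t ^ n := by
          have h := (p n).le_opNorm fun _ => y
          simpa [htdef] using h
        have h2' : ‖p n‖ * t ^ n ≤ C * (t / ρ) ^ n := by
          rw [div_pow, mul_div_assoc', le_div_iff₀ (pow_pos hρpos n)]
          calc ‖p n‖ * t ^ n * ρ ^ n = (‖p n‖ * ρ ^ n) * t ^ n := by ring
            _ ≤ C * t ^ n :=
                mul_le_mul_of_nonneg_right (hC n) (pow_nonneg ht0.le n)
        linarith
      set x : ℝ := t / ρ with hxdef
      have hx0 : 0 ≤ x := div_nonneg ht0.le hρpos.le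
      have hxhalf : x < 1 / 2 := by
        rw [hxdef, div_lt_iff₀ hρpos]; linarith
      have hxlt1 : x < 1 := by linarith
      have hgeo : Summable (fun n : ℕ => x ^ n) := summable_geometric_of_lt_one hx0 hxlt1
      have hBsum : Summable (fun n : ℕ => C * x ^ (n + 1 + k)) := by
        refine (hgeo.mul_left (C * x ^ (1 + k))).congr fun n => ?_
        rw [show n + 1 + k = n + (1 + k) by ring, pow_add]; ring
      have hgsum : Summable fun n => ‖g (n + 1 + k)‖ :=
        Summable.of_nonneg_of_le (fun n => norm_nonneg _) (fun n => hgb _) hBsum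
      have htsum : ‖S - g k‖ ≤ C * x ^ (1 + k) * (1 - x)⁻¹ := by
        rw [← h2.tsum_eq]
        calc ‖∑' n, g (n + 1 + k)‖ ≤ ∑' n, ‖g (n + 1 + k)‖ := norm_tsum_le_tsum_norm hgsum
          _ ≤ ∑' n : ℕ, C * x ^ (n + 1 + k) := hgsum.tsum_le_tsum (fun n => hgb _) hBsum
          _ = C * x ^ (1 + k) * (1 - x)⁻¹ := by
              have e : ∀ n : ℕ, C * x ^ (n + 1 + k) = (C * x ^ (1 + k)) * x ^ n := fun n => by
                rw [show n + 1 + k = n + (1 + k) by ring, pow_add]; ring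
              rw [tsum_congr e, tsum_mul_left, tsum_geometric_of_lt_one hx0 hxlt1]
      have hbound : ‖S - g k‖ ≤ 2 * C * x ^ (1 + k) := by
        have h1x : (1 - x)⁻¹ ≤ 2 := by
          rw [inv_le_comm₀ (by linarith) (by norm_num)]
          linarith
        calc ‖S - g k‖ ≤ C * x ^ (1 + k) * (1 - x)⁻¹ := htsum
          _ ≤ C * x ^ (1 + k) * 2 := by
              apply mul_le_mul_of_nonneg_left h1x (by positivity)
          _ = 2 * C * x ^ (1 + k) := by ring
      have hgk : g k = t ^ k * p k (fun _ => u) := by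
        have h := (p k).map_smul_univ (fun _ : Fin k => t) (fun _ : Fin k => u)
        have h' : p k (fun _ => t • u) = t ^ k * p k (fun _ => u) := by
          simpa [Finset.prod_const, smul_eq_mul] using h
        rw [hgdef]
        simp only
        rw [hyu, h']
      have hgklb : c / 2 * t ^ k < |g k| := by
        rw [hgk, abs_mul, abs_pow, abs_of_pos ht0]
        calc c / 2 * t ^ k = t ^ k * (c / 2) := by ring
          _ < t ^ k * |p k fun _ => u| :=
              mul_lt_mul_of_pos_left hqu (pow_pos ht0 k)
      have htail : 2 * C * x ^ (1 + k) < c / 2 * t ^ k := by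
        have h4 : t * (4 * C) < c * ρ ^ (k + 1) := (lt_div_iff₀ (by linarith)).mp htc
        have h5 : (t * (4 * C)) * t ^ k < (c * ρ ^ (k + 1)) * t ^ k :=
          mul_lt_mul_of_pos_right h4 (pow_pos ht0 k)
        rw [hxdef, div_pow, mul_div_assoc', div_lt_iff₀ (pow_pos hρpos _)]
        have e1 : 2 * C * t ^ (1 + k) = (t * (4 * C)) * t ^ k / 2 := by ring
        have e2 : c / 2 * t ^ k * ρ ^ (1 + k) = (c * ρ ^ (k + 1)) * t ^ k / 2 := by ring
        rw [e1, e2]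
        linarith
      intro h0
      have heq : ‖S - g k‖ = |g k| := by
        rw [h0, zero_sub, norm_neg, Real.norm_eq_abs]
      have := hbound
      rw [heq] at this
      linarith

theorem zero_set_analytic_measure_zero
    (d : ℕ) (U : Set (EuclideanSpace ℝ (Fin d)))
    (hU : IsOpen U) (hconn : IsConnected U)
    (f : EuclideanSpace ℝ (Fin d) → ℝ)
    (hf : AnalyticOnNhd ℝ f U)
    (hnz : ∃ x ∈ U, f x ≠ 0) :
    MeasureTheory.volume {x ∈ U | f x = 0} = 0 := by
  classical
  set μ := (volume : Measure (EuclideanSpace ℝ (Fin d))) with hμdef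
  set Z := {x ∈ U | f x = 0} with hZdef
  by_contra hμZ
  have hae := Besicovitch.ae_tendsto_measure_inter_div μ Z
  obtain ⟨x₀, hx₀Z, hx₀d⟩ := MeasureTheory.Measure.exists_mem_of_measure_ne_zero_of_ae hμZ hae
  have hx₀U : x₀ ∈ U := hx₀Z.1
  have hfx₀ : f x₀ = 0 := hx₀Z.2
  obtain ⟨p, hpa⟩ := hf x₀ hx₀U
  obtain ⟨R, hp⟩ := hpa
  by_cases hq : ∃ n y, p n (fun _ => y) ≠ 0
  · -- the cone argument
    obtain ⟨W, hWopen, hWne, hscale, t₀, ht₀, hWf⟩ := cone_lemma hp hq hfx₀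
    obtain ⟨w, hw⟩ := hWne
    have hWball : (W ∩ ball 0 1).Nonempty := by
      refine ⟨(‖w‖ + 1)⁻¹ • w, hscale _ (by positivity) w hw, ?_⟩
      rw [mem_ball_zero_iff, norm_smul, Real.norm_of_nonneg (by positivity),
        inv_mul_eq_div, div_lt_one (by positivity)]
      linarith [norm_nonneg w]
    set a := μ (W ∩ ball 0 1) with hadef
    have ha0 : a ≠ 0 := ((hWopen.inter isOpen_ball).measure_pos μ hWball).ne'
    set b := μ (ball (0 : EuclideanSpace ℝ (Fin d)) 1) with hbdef
    have hb0 : b ≠ 0 := (measure_ball_pos μ 0 one_pos).ne'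
    have hbt : b ≠ ⊤ := measure_ball_lt_top.ne
    have hat : a ≠ ⊤ := ((measure_mono Set.inter_subset_right).trans_lt measure_ball_lt_top).ne
    have hab : a / b ≠ 0 := by
      simp [ENNReal.div_eq_zero_iff, ha0, hbt]
    have key : ∀ r : ℝ, r ∈ Set.Ioo (0:ℝ) t₀ →
        μ (Z ∩ closedBall x₀ r) / μ (closedBall x₀ r) ≤ 1 - a / b := by
      rintro r ⟨hr0, hrt⟩
      set T := (fun y => y - x₀) ⁻¹' (W ∩ ball 0 r) with hTdef
      have hTmeas : MeasurableSet T :=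
        ((hWopen.inter isOpen_ball).preimage (continuous_id.sub continuous_const)).measurableSet
      have hTsub : T ⊆ closedBall x₀ r := by
        intro z hz
        have h1 := hz.2
        rw [mem_ball_zero_iff] at h1
        rw [mem_closedBall, dist_eq_norm]
        exact h1.le
      have hTZ : Disjoint (Z ∩ closedBall x₀ r) T := by
        rw [Set.disjoint_left]
        rintro z ⟨hzZ, -⟩ hzT
        have h2 := hzT.2
        rw [mem_ball_zero_iff] at h2
        have h1 := hWf _ hzT.1 (h2.trans hrt)
        apply h1
        simpa using hzZ.2
      have hμT : μ T = ENNReal.ofReal (r ^ d) * a := by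
        have h1 : μ T = μ (W ∩ ball 0 r) := by
          rw [hTdef]
          have he : (fun y : EuclideanSpace ℝ (Fin d) => y - x₀)
              = fun y => y + (-x₀) := by
            funext y; rw [sub_eq_add_neg]
          rw [he]
          exact measure_preimage_add_right μ (-x₀) _
        have h2 : W ∩ ball 0 r = r • (W ∩ ball (0 : EuclideanSpace ℝ (Fin d)) 1) := by
          rw [smul_set_inter₀ (ne_of_gt hr0), smul_unitBall_of_pos hr0]
          congr 1
          apply Set.Subset.antisymm
          · intro z hz
            exact ⟨r⁻¹ • z, hscale _ (inv_pos.mpr hr0) z hz, smul_inv_smul₀ hr0.ne' z⟩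
          · rintro z ⟨z', hz', rfl⟩
            exact hscale r hr0 z' hz'
        rw [h1, h2, Measure.addHaar_smul μ, finrank_euclideanSpace_fin,
          abs_of_pos (pow_pos hr0 d), hadef]
      have hμB : μ (closedBall x₀ r) = ENNReal.ofReal (r ^ d) * b := by
        rw [Measure.addHaar_closedBall μ x₀ hr0.le, finrank_euclideanSpace_fin, hbdef]
      have hsum : μ (Z ∩ closedBall x₀ r) + μ T ≤ μ (closedBall x₀ r) := by
        rw [← measure_union hTZ hTmeas]
        exact measure_mono (Set.union_subset Set.inter_subset_right hTsub)
      set Rr := ENNReal.ofReal (r ^ d) with hRdef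
      have hR0 : Rr ≠ 0 := (ENNReal.ofReal_pos.mpr (by positivity)).ne'
      have hRt : Rr ≠ ⊤ := ENNReal.ofReal_ne_top
      have hBne0 : Rr * b ≠ 0 := mul_ne_zero hR0 hb0
      have hBnet : Rr * b ≠ ⊤ := ENNReal.mul_ne_top hRt hbt
      rw [hμB, ENNReal.div_le_iff hBne0 hBnet]
      have hrhs : (1 - a / b) * (Rr * b) = Rr * b - Rr * a := by
        rw [ENNReal.sub_mul (fun _ _ => hBnet), one_mul]
        congr 1
        calc a / b * (Rr * b) = Rr * (a / b * b) := by ring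
          _ = Rr * a := by rw [ENNReal.div_mul_cancel hb0 hbt]
      rw [hrhs]
      rw [hμT, hμB] at hsum
      exact ENNReal.le_sub_of_add_le_right (ENNReal.mul_ne_top hRt hat) hsum
    have hlim : (1 : ℝ≥0∞) ≤ 1 - a / b := by
      apply le_of_tendsto hx₀d
      filter_upwards [Ioo_mem_nhdsGT_of_mem (Set.mem_Ico.mpr ⟨le_refl 0, ht₀⟩)] with r hr
      exact key r hr
    have hlt : (1 : ℝ≥0∞) - a / b < 1 :=
      ENNReal.sub_lt_self ENNReal.one_ne_top one_ne_zero hab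
    exact absurd hlim (not_le.mpr hlt)
  · -- f vanishes in a neighborhood of x₀, contradiction with hnz
    push_neg at hq
    have hev : f =ᶠ[nhds x₀] 0 := by
      have hball : Metric.eball x₀ R ∈ nhds x₀ := Metric.eball_mem_nhds _ hp.r_pos
      filter_upwards [hball] with z hz
      have hz' : z - x₀ ∈ Metric.eball (0 : EuclideanSpace ℝ (Fin d)) R := by
        simpa [Metric.mem_eball, edist_dist, dist_eq_norm] using hz
      have hsum := hp.hasSum hz'
      have h0 : HasSum (fun _ : ℕ => (0:ℝ)) (f (x₀ + (z - x₀))) := by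
        simpa [hq] using hsum
      have := h0.unique hasSum_zero
      simpa using this
    have heq := hf.eqOn_zero_of_preconnected_of_eventuallyEq_zero
      hconn.isPreconnected hx₀U hev
    obtain ⟨xw, hxwU, hxw⟩ := hnz
    exact hxw (heq hxwU)
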